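/- Assume F has bounded variation along x̄ uniformly over A with cumulative variation function η, hypotheses (C1) and (C2) hold for some δ̄ > 0 with η^{δ̄}(T) < +∞, and take δ ∈ (0, δ̄). Let F̂ be the multifunction obtained from F by modifying only the left endpoint: F̂(S,x,a) := F(S⁺,x,a) for x ∈ x̄(S) + δB and a ∈ A, and F̂(t,x,a) := F(t,x,a) otherwise; let η̂ denote its cumulative variation function. Then for every t ∈ (S,T], η(t) = η̂(t) + sup_{a∈A} d_H(F(S⁺, x̄(S), a), F(S, x̄(S), a)). -/

import Mathlib

open Set Metric Filter MeasureTheory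
open scoped ENNReal Topology Classical

noncomputable section

/-- Euclidean space `ℝ^n`. -/
abbrev Eucl (n : ℕ) : Type := EuclideanSpace ℝ (Fin n)

/-- A (strict) partition `a = τ 0 < τ 1 < ⋯ < τ N = b` of the interval `[a,b]`. -/
def IsPartition (a b : ℝ) (N : ℕ) (τ : ℕ → ℝ) : Prop :=
  0 < N ∧ τ 0 = a ∧ τ N = b ∧ ∀ i < N, τ i < τ (i + 1)

/-- The mesh (diameter) of the partition `τ` is at most `ε`. -/
def MeshLE (N : ℕ) (τ : ℕ → ℝ) (ε : ℝ) : Prop :=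
  ∀ i < N, τ (i + 1) - τ i ≤ ε

/-- The tube `x̄([s,t]) + δ B` around the arc `x̄` on `[s,t]`. -/
def tube {n : ℕ} (xbar : ℝ → Eucl n) (s t δ : ℝ) : Set (Eucl n) :=
  {y | ∃ r ∈ Icc s t, dist y (xbar r) ≤ δ}

/-- `I^δ(𝒯) = Σᵢ sup { d_H (F(t_{i+1},x,a), F(t_i,x,a)) : x ∈ x̄([t_i,t_{i+1}]) + δB, a ∈ A }`. -/
def variSum {n k : ℕ} (F : ℝ → Eucl n → Eucl k → Set (Eucl n)) (xbar : ℝ → Eucl n)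
    (A : Set (Eucl k)) (δ : ℝ) (N : ℕ) (τ : ℕ → ℝ) : ℝ≥0∞ :=
  ∑ i ∈ Finset.range N,
    ⨆ x ∈ tube xbar (τ i) (τ (i + 1)) δ, ⨆ a ∈ A,
      EMetric.hausdorffEdist (F (τ (i + 1)) x a) (F (τ i) x a)

/-- `η^δ_ε(t)`: the `(δ,ε)`-perturbed cumulative variation of `F` along `x̄`, uniformly
over `A`, on the base interval `[S,t]`.  (For `t = S` there are no partitions and the
supremum is `0`.) -/
def etaE {n k : ℕ} (F : ℝ → Eucl n → Eucl k → Set (Eucl n)) (xbar : ℝ → Eucl n)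
    (A : Set (Eucl k)) (S δ ε t : ℝ) : ℝ≥0∞ :=
  ⨆ (N : ℕ) (τ : ℕ → ℝ) (_ : IsPartition S t N τ) (_ : MeshLE N τ ε),
    variSum F xbar A δ N τ

/-- `η^δ(t) = lim_{ε ↓ 0} η^δ_ε(t)` (the limit of a monotone family: the infimum). -/
def etaD {n k : ℕ} (F : ℝ → Eucl n → Eucl k → Set (Eucl n)) (xbar : ℝ → Eucl n)
    (A : Set (Eucl k)) (S δ t : ℝ) : ℝ≥0∞ :=
  ⨅ (ε : ℝ) (_ : 0 < ε), etaE F xbar A S δ ε t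

/-- `η(t) = lim_{δ ↓ 0} η^δ(t)`: the cumulative variation function of `F` along `x̄`,
uniformly over `A`. -/
def eta {n k : ℕ} (F : ℝ → Eucl n → Eucl k → Set (Eucl n)) (xbar : ℝ → Eucl n)
    (A : Set (Eucl k)) (S t : ℝ) : ℝ≥0∞ :=
  ⨅ (δ : ℝ) (_ : 0 < δ), etaD F xbar A S δ t

/-- Hypothesis (C1): nonempty closed values, measurability in `t`, and uniform
boundedness `F(t,x,a) ⊆ cB` near the arc. -/
def HypC1 {n k : ℕ} (F : ℝ → Eucl n → Eucl k → Set (Eucl n)) (xbar : ℝ → Eucl n)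
    (A : Set (Eucl k)) (S T δbar : ℝ) : Prop :=
  (∀ t x a, (F t x a).Nonempty ∧ IsClosed (F t x a)) ∧
  (∀ (x : Eucl n) (a : Eucl k), ∀ U : Set (Eucl n), IsOpen U →
     MeasurableSet {t | t ∈ Icc S T ∧ (F t x a ∩ U).Nonempty}) ∧
  (∃ c > (0 : ℝ), ∀ t ∈ Icc S T, ∀ a ∈ A, ∀ x : Eucl n, dist x (xbar t) ≤ δbar →
     F t x a ⊆ closedBall 0 c)

/-- Hypothesis (C2): `F(t,x,a) ⊆ F(t,x',a') + γ(|x-x'| + |a-a'|)B` near the arc, where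
`γ` is a modulus of continuity. -/
def HypC2 {n k : ℕ} (F : ℝ → Eucl n → Eucl k → Set (Eucl n)) (xbar : ℝ → Eucl n)
    (A : Set (Eucl k)) (S T δbar : ℝ) (γ : ℝ → ℝ) : Prop :=
  ContinuousOn γ (Ici 0) ∧ MonotoneOn γ (Ici 0) ∧ γ 0 = 0 ∧ (∀ r ≥ (0 : ℝ), 0 ≤ γ r) ∧
  ∀ t ∈ Icc S T, ∀ x x' : Eucl n, ∀ a ∈ A, ∀ a' ∈ A,
    dist x (xbar t) ≤ δbar → dist x' (xbar t) ≤ δbar →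
    ∀ y ∈ F t x a, ∃ z ∈ F t x' a', dist y z ≤ γ (dist x x' + dist a a')

end

noncomputable section

/-- The multifunction `F̂` obtained from `F` by replacing only the left endpoint value
near the arc by the right limit `Fp` at `S`. -/
def leftMod {n k : ℕ} (S δ : ℝ) (xbar : ℝ → Eucl n)
    (F : ℝ → Eucl n → Eucl k → Set (Eucl n))
    (Fp : Eucl n → Eucl k → Set (Eucl n)) : ℝ → Eucl n → Eucl k → Set (Eucl n) :=
  fun t x a =>
    if t = S ∧ dist x (xbar S) ≤ δ then Fp x a else F t x a

end

section AuxStmt19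

open EMetric

variable {n k : ℕ}

lemma part_mono {S t : ℝ} {N : ℕ} {τ : ℕ → ℝ} (hp : IsPartition S t N τ) :
    ∀ {i j : ℕ}, i ≤ j → j ≤ N → τ i ≤ τ j := by
  intro i j hij hjN
  induction j with
  | zero => simp [Nat.le_zero.mp hij]
  | succ m ih =>
    rcases Nat.eq_or_lt_of_le hij with rfl | h
    · exact le_rfl
    · exact (ih (Nat.lt_succ_iff.mp h) ((Nat.le_succ m).trans hjN)).trans
        (le_of_lt (hp.2.2.2 m (Nat.lt_of_succ_le hjN)))

lemma part_mem {S t : ℝ} {N : ℕ} {τ : ℕ → ℝ} (hp : IsPartition S t N τ) {i : ℕ}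
    (hi : i ≤ N) : S ≤ τ i ∧ τ i ≤ t := by
  constructor
  · have := part_mono hp (Nat.zero_le i) hi; rwa [hp.2.1] at this
  · have := part_mono hp hi le_rfl; rwa [hp.2.2.1] at this

lemma tube_mono {xbar : ℝ → Eucl n} {s t δ₁ δ₂ : ℝ} (h : δ₁ ≤ δ₂) :
    tube xbar s t δ₁ ⊆ tube xbar s t δ₂ := by
  rintro x ⟨r, hr, hd⟩; exact ⟨r, hr, hd.trans h⟩

lemma variSum_mono_delta {F : ℝ → Eucl n → Eucl k → Set (Eucl n)} {xbar : ℝ → Eucl n}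
    {A : Set (Eucl k)} {δ₁ δ₂ : ℝ} (h : δ₁ ≤ δ₂) (N : ℕ) (τ : ℕ → ℝ) :
    variSum F xbar A δ₁ N τ ≤ variSum F xbar A δ₂ N τ := by
  refine Finset.sum_le_sum fun i _ => ?_
  exact iSup₂_le fun x hx => le_iSup₂_of_le x (tube_mono h hx) le_rfl

lemma etaE_mono_eps {F : ℝ → Eucl n → Eucl k → Set (Eucl n)} {xbar : ℝ → Eucl n}
    {A : Set (Eucl k)} {S δ t : ℝ} {ε₁ ε₂ : ℝ} (h : ε₁ ≤ ε₂) :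
    etaE F xbar A S δ ε₁ t ≤ etaE F xbar A S δ ε₂ t := by
  refine iSup_le fun N => iSup_le fun τ => iSup_le fun hp => iSup_le fun hm => ?_
  exact le_iSup_of_le N (le_iSup_of_le τ (le_iSup_of_le hp
    (le_iSup_of_le (fun i hi => (hm i hi).trans h) le_rfl)))

lemma etaE_mono_delta {F : ℝ → Eucl n → Eucl k → Set (Eucl n)} {xbar : ℝ → Eucl n}
    {A : Set (Eucl k)} {S ε t : ℝ} {δ₁ δ₂ : ℝ} (h : δ₁ ≤ δ₂) :
    etaE F xbar A S δ₁ ε t ≤ etaE F xbar A S δ₂ ε t := by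
  refine iSup_le fun N => iSup_le fun τ => iSup_le fun hp => iSup_le fun hm => ?_
  exact le_iSup_of_le N (le_iSup_of_le τ (le_iSup_of_le hp
    (le_iSup_of_le hm (variSum_mono_delta h N τ))))

lemma etaD_mono_delta {F : ℝ → Eucl n → Eucl k → Set (Eucl n)} {xbar : ℝ → Eucl n}
    {A : Set (Eucl k)} {S t : ℝ} {δ₁ δ₂ : ℝ} (h : δ₁ ≤ δ₂) :
    etaD F xbar A S δ₁ t ≤ etaD F xbar A S δ₂ t :=
  le_iInf fun ε => le_iInf fun hε => (iInf₂_le ε hε).trans (etaE_mono_eps le_rfl |>.trans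
    (etaE_mono_delta h))

lemma etaD_le_etaE {F : ℝ → Eucl n → Eucl k → Set (Eucl n)} {xbar : ℝ → Eucl n}
    {A : Set (Eucl k)} {S δ t : ℝ} {ε : ℝ} (hε : 0 < ε) :
    etaD F xbar A S δ t ≤ etaE F xbar A S δ ε t :=
  iInf₂_le ε hε

lemma variSum_le_etaE {F : ℝ → Eucl n → Eucl k → Set (Eucl n)} {xbar : ℝ → Eucl n}
    {A : Set (Eucl k)} {S δ t ε : ℝ} {N : ℕ} {τ : ℕ → ℝ}
    (hp : IsPartition S t N τ) (hm : MeshLE N τ ε) :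
    variSum F xbar A δ N τ ≤ etaE F xbar A S δ ε t :=
  le_iSup_of_le N (le_iSup_of_le τ (le_iSup_of_le hp (le_iSup_of_le hm le_rfl)))

lemma binf_add (g : ℝ → ℝ≥0∞) (c : ℝ≥0∞) :
    (⨅ ε > (0:ℝ), g ε) + c = ⨅ ε > (0:ℝ), (g ε + c) := by
  have h1 : (⨅ ε > (0:ℝ), g ε) = ⨅ p : {ε : ℝ // 0 < ε}, g p.1 := by
    rw [iInf_subtype']
  have h2 : (⨅ ε > (0:ℝ), (g ε + c)) = ⨅ p : {ε : ℝ // 0 < ε}, (g p.1 + c) := by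
    rw [iInf_subtype']
  rw [h1, h2]
  haveI : Nonempty {ε : ℝ // 0 < ε} := ⟨⟨1, one_pos⟩⟩
  exact ENNReal.iInf_add

lemma hausC2 {F : ℝ → Eucl n → Eucl k → Set (Eucl n)} {xbar : ℝ → Eucl n}
    {A : Set (Eucl k)} {S T δbar : ℝ} {γ : ℝ → ℝ}
    (hC2 : HypC2 F xbar A S T δbar γ) {t : ℝ} (ht : t ∈ Icc S T)
    {x x' : Eucl n} {a a' : Eucl k} (ha : a ∈ A) (ha' : a' ∈ A)
    (hx1 : dist x (xbar t) ≤ δbar) (hx2 : dist x' (xbar t) ≤ δbar) :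
    hausdorffEdist (F t x a) (F t x' a') ≤ ENNReal.ofReal (γ (dist x x' + dist a a')) := by
  obtain ⟨-, -, -, -, h⟩ := hC2
  refine hausdorffEdist_le_of_mem_edist ?_ ?_
  · intro y hy
    obtain ⟨z, hz, hd⟩ := h t ht x x' a ha a' ha' hx1 hx2 y hy
    exact ⟨z, hz, by rw [edist_dist]; exact ENNReal.ofReal_le_ofReal hd⟩
  · intro y hy
    obtain ⟨z, hz, hd⟩ := h t ht x' x a' ha' a ha hx2 hx1 y hy
    refine ⟨z, hz, ?_⟩
    rw [edist_dist]
    exact ENNReal.ofReal_le_ofReal (hd.trans_eq (by rw [dist_comm x' x, dist_comm a' a]))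

lemma gamma_small {F : ℝ → Eucl n → Eucl k → Set (Eucl n)} {xbar : ℝ → Eucl n}
    {A : Set (Eucl k)} {S T δbar : ℝ} {γ : ℝ → ℝ}
    (hC2 : HypC2 F xbar A S T δbar γ) {ρ : ℝ} (hρ : 0 < ρ) :
    ∃ r₁ > 0, ∀ r, 0 ≤ r → r ≤ r₁ → γ r ≤ ρ := by
  have hct : ContinuousWithinAt γ (Ici 0) 0 := hC2.1 0 (self_mem_Ici)
  have h0 : γ 0 = 0 := hC2.2.2.1
  have hev : ∀ᶠ r in 𝓝[Ici (0:ℝ)] 0, γ r < ρ := by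
    have := hct.tendsto
    rw [h0] at this
    exact this.eventually_lt_const hρ
  rw [Filter.Eventually, Metric.mem_nhdsWithin_iff] at hev
  obtain ⟨ε, hε, hsub⟩ := hev
  refine ⟨ε / 2, by positivity, fun r hr0 hr1 => ?_⟩
  have : r ∈ ball (0:ℝ) ε ∩ Ici 0 := by
    constructor
    · rw [Metric.mem_ball, dist_zero_right, Real.norm_eq_abs, abs_of_nonneg hr0]; linarith
    · exact hr0
  exact (hsub this).le

lemma xbar_small {xbar : ℝ → Eucl n} {S T : ℝ} (hST : S ≤ T)
    (hx : ContinuousOn xbar (Icc S T)) {ρ : ℝ} (hρ : 0 < ρ) :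
    ∃ ε > 0, ∀ r, S ≤ r → r ≤ T → r ≤ S + ε → dist (xbar r) (xbar S) ≤ ρ := by
  have hct : ContinuousWithinAt xbar (Icc S T) S := hx S ⟨le_rfl, hST⟩
  have hev : ∀ᶠ r in 𝓝[Icc S T] S, dist (xbar r) (xbar S) < ρ := by
    have h2 : Filter.Tendsto (fun r => dist (xbar r) (xbar S)) (𝓝[Icc S T] S) (𝓝 0) := by
      simpa using (hct.tendsto.dist (tendsto_const_nhds (x := xbar S)))
    exact h2.eventually_lt_const hρ
  rw [Filter.Eventually, Metric.mem_nhdsWithin_iff] at hev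
  obtain ⟨ε, hε, hsub⟩ := hev
  refine ⟨ε / 2, by positivity, fun r h1 h2 h3 => ?_⟩
  have : r ∈ ball S ε ∩ Icc S T := by
    constructor
    · rw [Metric.mem_ball, Real.dist_eq, abs_of_nonneg (by linarith)]; linarith
    · exact ⟨h1, h2⟩
  exact (hsub this).le

lemma nebot_IocS {S T : ℝ} (hST : S < T) : (𝓝[Ioc S T] S).NeBot := by
  rw [← mem_closure_iff_nhdsWithin_neBot, closure_Ioc hST.ne]
  exact ⟨le_rfl, hST.le⟩

lemma hausC2_Fp {F : ℝ → Eucl n → Eucl k → Set (Eucl n)} {xbar : ℝ → Eucl n}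
    {A : Set (Eucl k)} {S T δbar δ : ℝ} {γ : ℝ → ℝ}
    (hST : S < T) (hx : ContinuousOn xbar (Icc S T))
    (hC2 : HypC2 F xbar A S T δbar γ) (hδ : 0 < δ) (hδδ : δ < δbar)
    {Fp : Eucl n → Eucl k → Set (Eucl n)}
    (hFp : ∀ x ∈ closedBall (xbar S) δ, ∀ a ∈ A,
      Filter.Tendsto (fun s => hausdorffEdist (F s x a) (Fp x a))
        (𝓝[Ioc S T] S) (𝓝 0))
    {x x' : Eucl n} (hx1 : x ∈ closedBall (xbar S) δ) (hx2 : x' ∈ closedBall (xbar S) δ)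
    {a a' : Eucl k} (ha : a ∈ A) (ha' : a' ∈ A) :
    hausdorffEdist (Fp x a) (Fp x' a') ≤ ENNReal.ofReal (γ (dist x x' + dist a a')) := by
  haveI := nebot_IocS hST
  set L := 𝓝[Ioc S T] S
  obtain ⟨ε₁, hε₁, hxb⟩ := xbar_small hST.le hx (sub_pos.mpr hδδ)
  have hevx : ∀ᶠ s in L, dist (xbar s) (xbar S) ≤ δbar - δ := by
    rw [Filter.Eventually, Metric.mem_nhdsWithin_iff]
    refine ⟨ε₁, hε₁, fun s hs => ?_⟩
    obtain ⟨hb, hIoc⟩ := hs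
    rw [Metric.mem_ball, Real.dist_eq, abs_of_nonneg (by linarith [hIoc.1])] at hb
    exact hxb s hIoc.1.le hIoc.2 (by linarith)
  have hevm : ∀ᶠ s in L, s ∈ Ioc S T := eventually_mem_nhdsWithin
  have hev : ∀ᶠ s in L,
      hausdorffEdist (Fp x a) (Fp x' a') ≤
        hausdorffEdist (F s x a) (Fp x a) +
        ENNReal.ofReal (γ (dist x x' + dist a a')) +
        hausdorffEdist (F s x' a') (Fp x' a') := by
    filter_upwards [hevx, hevm] with s hxs hms
    have hmem : s ∈ Icc S T := ⟨hms.1.le, hms.2⟩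
    have hd1 : dist x (xbar s) ≤ δbar := by
      calc dist x (xbar s) ≤ dist x (xbar S) + dist (xbar S) (xbar s) := dist_triangle _ _ _
        _ ≤ δ + (δbar - δ) := add_le_add (mem_closedBall.mp hx1) (by rwa [dist_comm])
        _ = δbar := by ring
    have hd2 : dist x' (xbar s) ≤ δbar := by
      calc dist x' (xbar s) ≤ dist x' (xbar S) + dist (xbar S) (xbar s) := dist_triangle _ _ _
        _ ≤ δ + (δbar - δ) := add_le_add (mem_closedBall.mp hx2) (by rwa [dist_comm])
        _ = δbar := by ring
    calc hausdorffEdist (Fp x a) (Fp x' a')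
        ≤ hausdorffEdist (Fp x a) (F s x a) + hausdorffEdist (F s x a) (Fp x' a') :=
          hausdorffEdist_triangle
      _ ≤ hausdorffEdist (Fp x a) (F s x a) +
          (hausdorffEdist (F s x a) (F s x' a') + hausdorffEdist (F s x' a') (Fp x' a')) :=
          add_le_add_right hausdorffEdist_triangle _
      _ ≤ hausdorffEdist (F s x a) (Fp x a) +
          ENNReal.ofReal (γ (dist x x' + dist a a')) +
          hausdorffEdist (F s x' a') (Fp x' a') := by
          rw [show hausdorffEdist (Fp x a) (F s x a) = hausdorffEdist (F s x a) (Fp x a) from hausdorffEdist_comm, add_assoc]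
          exact add_le_add_right (add_le_add_left
            (hausC2 hC2 hmem ha ha' hd1 hd2) _) _
  have hlim : Filter.Tendsto (fun s =>
      hausdorffEdist (F s x a) (Fp x a) +
      ENNReal.ofReal (γ (dist x x' + dist a a')) +
      hausdorffEdist (F s x' a') (Fp x' a')) L
      (𝓝 (0 + ENNReal.ofReal (γ (dist x x' + dist a a')) + 0)) :=
    ((hFp x hx1 a ha).add tendsto_const_nhds).add (hFp x' hx2 a' ha')
  rw [zero_add, add_zero] at hlim
  exact ge_of_tendsto hlim hev

lemma ev_xbar {xbar : ℝ → Eucl n} {S T : ℝ} (hST : S < T)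
    (hx : ContinuousOn xbar (Icc S T)) {ρ : ℝ} (hρ : 0 < ρ) :
    ∀ᶠ s in 𝓝[Ioc S T] S, dist (xbar s) (xbar S) ≤ ρ := by
  obtain ⟨ε₁, hε₁, hxb⟩ := xbar_small hST.le hx hρ
  rw [Filter.Eventually, Metric.mem_nhdsWithin_iff]
  refine ⟨ε₁, hε₁, fun s hs => ?_⟩
  obtain ⟨hb, hIoc⟩ := hs
  rw [Metric.mem_ball, Real.dist_eq, abs_of_nonneg (by linarith [hIoc.1])] at hb
  exact hxb s hIoc.1.le hIoc.2 (by linarith)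

lemma K3_uniform {F : ℝ → Eucl n → Eucl k → Set (Eucl n)} {xbar : ℝ → Eucl n}
    {A : Set (Eucl k)} {S T δbar δ : ℝ} {γ : ℝ → ℝ}
    (hST : S < T) (hx : ContinuousOn xbar (Icc S T)) (hA : IsCompact A)
    (hC2 : HypC2 F xbar A S T δbar γ) (hδ : 0 < δ) (hδδ : δ < δbar)
    {Fp : Eucl n → Eucl k → Set (Eucl n)}
    (hFp : ∀ x ∈ closedBall (xbar S) δ, ∀ a ∈ A,
      Filter.Tendsto (fun s => hausdorffEdist (F s x a) (Fp x a))
        (𝓝[Ioc S T] S) (𝓝 0))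
    {ρ : ℝ} (hρ : 0 < ρ) :
    ∀ᶠ s in 𝓝[Ioc S T] S, ∀ a ∈ A,
      hausdorffEdist (F s (xbar S) a) (Fp (xbar S) a) ≤ ENNReal.ofReal ρ := by
  have hδbar : 0 < δbar := hδ.trans hδδ
  obtain ⟨r₁, hr₁, hγ⟩ := gamma_small hC2 (show (0:ℝ) < ρ/3 by positivity)
  have hcov : A ⊆ ⋃ a ∈ A, ball a r₁ := fun a ha => mem_biUnion ha (mem_ball_self hr₁)
  obtain ⟨t0, ht0A, ht0fin, ht0cov⟩ :=
    hA.elim_finite_subcover_image (fun a _ => Metric.isOpen_ball) hcov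
  have hxS : xbar S ∈ closedBall (xbar S) δ := mem_closedBall_self hδ.le
  have hρ3 : (0:ℝ≥0∞) < ENNReal.ofReal (ρ/3) := ENNReal.ofReal_pos.mpr (by positivity)
  have hevj : ∀ᶠ s in 𝓝[Ioc S T] S, ∀ a ∈ t0,
      hausdorffEdist (F s (xbar S) a) (Fp (xbar S) a) ≤ ENNReal.ofReal (ρ/3) := by
    rw [Filter.eventually_all_finite ht0fin]
    intro a ha
    exact ((hFp (xbar S) hxS a (ht0A ha)).eventually_lt_const hρ3).mono fun s hs => hs.le
  have hevd : ∀ᶠ s in 𝓝[Ioc S T] S, dist (xbar s) (xbar S) ≤ δbar := ev_xbar hST hx hδbar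
  have hevm : ∀ᶠ s in 𝓝[Ioc S T] S, s ∈ Ioc S T := eventually_mem_nhdsWithin
  filter_upwards [hevj, hevd, hevm] with s hj hd hm
  intro a ha
  obtain ⟨a₀, ha₀, haball⟩ := mem_iUnion₂.mp (ht0cov ha)
  have ha₀A : a₀ ∈ A := ht0A ha₀
  have hdist : dist a a₀ ≤ r₁ := (mem_ball.mp haball).le
  have hsIcc : s ∈ Icc S T := ⟨hm.1.le, hm.2⟩
  have hdb : dist (xbar S) (xbar s) ≤ δbar := by rwa [dist_comm]
  have e1 : hausdorffEdist (F s (xbar S) a) (F s (xbar S) a₀) ≤ ENNReal.ofReal (ρ/3) := by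
    refine (hausC2 hC2 hsIcc ha ha₀A hdb hdb).trans (ENNReal.ofReal_le_ofReal ?_)
    rw [dist_self, zero_add]
    exact hγ _ dist_nonneg hdist
  have e2 : hausdorffEdist (F s (xbar S) a₀) (Fp (xbar S) a₀) ≤ ENNReal.ofReal (ρ/3) :=
    hj a₀ ha₀
  have e3 : hausdorffEdist (Fp (xbar S) a₀) (Fp (xbar S) a) ≤ ENNReal.ofReal (ρ/3) := by
    refine (hausC2_Fp hST hx hC2 hδ hδδ hFp hxS hxS ha₀A ha).trans
      (ENNReal.ofReal_le_ofReal ?_)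
    rw [dist_self, zero_add]
    exact hγ _ dist_nonneg (by rwa [dist_comm])
  calc hausdorffEdist (F s (xbar S) a) (Fp (xbar S) a)
      ≤ hausdorffEdist (F s (xbar S) a) (F s (xbar S) a₀) +
        hausdorffEdist (F s (xbar S) a₀) (Fp (xbar S) a) := hausdorffEdist_triangle
    _ ≤ hausdorffEdist (F s (xbar S) a) (F s (xbar S) a₀) +
        (hausdorffEdist (F s (xbar S) a₀) (Fp (xbar S) a₀) +
         hausdorffEdist (Fp (xbar S) a₀) (Fp (xbar S) a)) :=
        add_le_add_right hausdorffEdist_triangle _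
    _ ≤ ENNReal.ofReal (ρ/3) + (ENNReal.ofReal (ρ/3) + ENNReal.ofReal (ρ/3)) :=
        add_le_add e1 (add_le_add e2 e3)
    _ = ENNReal.ofReal ρ := by
        rw [← ENNReal.ofReal_add (by positivity) (by positivity),
          ← ENNReal.ofReal_add (by positivity) (by positivity)]
        congr 1
        ring

lemma exists_partition {S t : ℝ} (h : S < t) {ε : ℝ} (hε : 0 < ε) :
    ∃ N τ, IsPartition S t N τ ∧ MeshLE N τ ε := by
  set N := ⌈(t - S)/ε⌉₊ with hN
  have hN0 : 0 < N := Nat.ceil_pos.mpr (div_pos (sub_pos.mpr h) hε)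
  have hNR : (0:ℝ) < N := Nat.cast_pos.mpr hN0
  have hstep : 0 < (t - S)/N := div_pos (sub_pos.mpr h) hNR
  have hstepε : (t - S)/N ≤ ε := by
    rw [div_le_iff₀ hNR]
    have := Nat.le_ceil ((t - S)/ε)
    rw [← hN] at this
    calc t - S = ε * ((t - S)/ε) := by field_simp
      _ ≤ ε * (N:ℝ) := mul_le_mul_of_nonneg_left this hε.le
  refine ⟨N, fun i => S + i * ((t - S)/N), ⟨hN0, by simp, ?_, ?_⟩, ?_⟩
  · field_simp
    ring
  · intro i _
    have : (i:ℝ) < (i:ℝ) + 1 := by linarith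
    push_cast
    nlinarith
  · intro i _
    have : (S + ((i:ℝ)+1) * ((t - S)/N)) - (S + (i:ℝ) * ((t - S)/N)) = (t - S)/N := by ring
    push_cast
    rw [this]
    exact hstepε

lemma main_ub {F : ℝ → Eucl n → Eucl k → Set (Eucl n)} {xbar : ℝ → Eucl n}
    {A : Set (Eucl k)} {S T δbar δ : ℝ} {γ : ℝ → ℝ}
    (hST : S < T) (hx : ContinuousOn xbar (Icc S T))
    (hC2 : HypC2 F xbar A S T δbar γ) (hδ : 0 < δ) (hδδ : δ < δbar)
    {Fp : Eucl n → Eucl k → Set (Eucl n)}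
    (hFp : ∀ x ∈ closedBall (xbar S) δ, ∀ a ∈ A,
      Filter.Tendsto (fun s => hausdorffEdist (F s x a) (Fp x a))
        (𝓝[Ioc S T] S) (𝓝 0))
    {t : ℝ} (htS : S < t) (htT : t ≤ T)
    {δ' ρ : ℝ} (hδ'0 : 0 < δ') (hδ'le : δ' ≤ δ/2) (hρ0 : 0 < ρ) (hρle : ρ ≤ δ/2) :
    ∃ ε₀ > 0, ∀ ε, 0 < ε → ε ≤ ε₀ →
      etaE F xbar A S δ' ε t ≤ etaE (leftMod S δ xbar F Fp) xbar A S δ' ε t +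
        ((⨆ a ∈ A, hausdorffEdist (Fp (xbar S) a) (F S (xbar S) a)) +
          ENNReal.ofReal (2 * γ (δ' + ρ))) := by
  obtain ⟨ε₀, hε₀, hxb⟩ := xbar_small hST.le hx hρ0
  refine ⟨ε₀, hε₀, fun ε hε hεle => ?_⟩
  set G := leftMod S δ xbar F Fp with hG
  set dsup := ⨆ a ∈ A, hausdorffEdist (Fp (xbar S) a) (F S (xbar S) a) with hdsup
  set D := dsup + ENNReal.ofReal (2 * γ (δ' + ρ)) with hD
  refine iSup_le fun N => iSup_le fun τ => iSup_le fun hp => iSup_le fun hm => ?_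
  obtain ⟨N', rfl⟩ : ∃ N', N = N' + 1 := ⟨N - 1, (Nat.succ_pred_eq_of_pos hp.1).symm⟩
  have hτ0 : τ 0 = S := hp.2.1
  have hτ1S : S < τ 1 := by
    have := hp.2.2.2 0 (Nat.succ_pos N'); rwa [hτ0] at this
  have hτ1t : τ 1 ≤ t := (part_mem hp (Nat.one_le_iff_ne_zero.mpr (Nat.succ_ne_zero N'))).2
  have hτ1ε : τ 1 ≤ S + ε₀ := by
    have := hm 0 (Nat.succ_pos N'); rw [hτ0] at this; linarith
  have hGne : ∀ s, s ≠ S → ∀ x a, G s x a = F s x a := by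
    intro s hs x a
    simp only [hG, leftMod]
    rw [if_neg]; rintro ⟨h1, -⟩; exact hs h1
  have htube : ∀ x ∈ tube xbar (τ 0) (τ 1) δ', dist x (xbar S) ≤ δ' + ρ := by
    rintro x ⟨r, hr, hd⟩
    rw [hτ0] at hr
    have h1 : dist (xbar r) (xbar S) ≤ ρ :=
      hxb r hr.1 ((hr.2.trans hτ1t).trans htT) (by linarith [hr.2])
    calc dist x (xbar S) ≤ dist x (xbar r) + dist (xbar r) (xbar S) := dist_triangle _ _ _
      _ ≤ δ' + ρ := add_le_add hd h1
  have hγnn : 0 ≤ γ (δ' + ρ) := hC2.2.2.2.1 _ (by positivity)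
  set term0G := ⨆ x ∈ tube xbar (τ 0) (τ 1) δ', ⨆ a ∈ A,
      hausdorffEdist (G (τ 1) x a) (G (τ 0) x a) with hterm0G
  have hterm0 : (⨆ x ∈ tube xbar (τ 0) (τ 1) δ', ⨆ a ∈ A,
      hausdorffEdist (F (τ 1) x a) (F (τ 0) x a)) ≤ term0G + D := by
    refine iSup₂_le fun x hx' => iSup₂_le fun a ha => ?_
    have hxδρ := htube x hx'
    have hxδ : dist x (xbar S) ≤ δ := by linarith
    have hxδbar : dist x (xbar S) ≤ δbar := by linarith
    have hG1 : G (τ 1) x a = F (τ 1) x a := hGne _ (ne_of_gt hτ1S) x a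
    have hG0 : G (τ 0) x a = Fp x a := by
      simp only [hG, leftMod]
      rw [if_pos ⟨hτ0, hxδ⟩]
    have hSmem : S ∈ Icc S T := ⟨le_rfl, hST.le⟩
    have e1 : hausdorffEdist (F (τ 1) x a) (Fp x a) ≤ term0G := by
      rw [← hG1, ← hG0]
      exact le_iSup₂_of_le x hx' (le_iSup₂_of_le a ha le_rfl)
    have e2 : hausdorffEdist (Fp x a) (Fp (xbar S) a) ≤ ENNReal.ofReal (γ (δ' + ρ)) := by
      refine (hausC2_Fp hST hx hC2 hδ hδδ hFp (mem_closedBall.mpr hxδ)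
        (mem_closedBall_self hδ.le) ha ha).trans (ENNReal.ofReal_le_ofReal ?_)
      rw [dist_self, add_zero]
      exact hC2.2.1 (mem_Ici.mpr dist_nonneg) (mem_Ici.mpr (by positivity)) hxδρ
    have e3 : hausdorffEdist (Fp (xbar S) a) (F S (xbar S) a) ≤ dsup :=
      le_iSup₂_of_le a ha le_rfl
    have e4 : hausdorffEdist (F S (xbar S) a) (F S x a) ≤ ENNReal.ofReal (γ (δ' + ρ)) := by
      have hb0 : dist (xbar S) (xbar S) ≤ δbar := by
        rw [dist_self]; linarith
      refine (hausC2 hC2 hSmem ha ha hb0 hxδbar).trans (ENNReal.ofReal_le_ofReal ?_)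
      rw [dist_self, add_zero, dist_comm]
      exact hC2.2.1 (mem_Ici.mpr dist_nonneg) (mem_Ici.mpr (by positivity)) hxδρ
    calc hausdorffEdist (F (τ 1) x a) (F (τ 0) x a)
        = hausdorffEdist (F (τ 1) x a) (F S x a) := by rw [hτ0]
      _ ≤ hausdorffEdist (F (τ 1) x a) (Fp x a) +
          hausdorffEdist (Fp x a) (F S x a) := hausdorffEdist_triangle
      _ ≤ hausdorffEdist (F (τ 1) x a) (Fp x a) +
          (hausdorffEdist (Fp x a) (Fp (xbar S) a) +
           (hausdorffEdist (Fp (xbar S) a) (F S (xbar S) a) +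
            hausdorffEdist (F S (xbar S) a) (F S x a))) := by
          refine add_le_add_right (hausdorffEdist_triangle.trans
            (add_le_add_right hausdorffEdist_triangle _)) _
      _ ≤ term0G + (ENNReal.ofReal (γ (δ' + ρ)) + (dsup + ENNReal.ofReal (γ (δ' + ρ)))) :=
          add_le_add e1 (add_le_add e2 (add_le_add e3 e4))
      _ = term0G + D := by
          rw [hD, two_mul, ENNReal.ofReal_add hγnn hγnn]
          ring
  have hrest : ∀ i ∈ Finset.range N',
      (⨆ x ∈ tube xbar (τ (i+1)) (τ (i+1+1)) δ', ⨆ a ∈ A,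
        hausdorffEdist (G (τ (i+1+1)) x a) (G (τ (i+1)) x a)) =
      (⨆ x ∈ tube xbar (τ (i+1)) (τ (i+1+1)) δ', ⨆ a ∈ A,
        hausdorffEdist (F (τ (i+1+1)) x a) (F (τ (i+1)) x a)) := by
    intro i hi
    simp only [Finset.mem_range] at hi
    have hiN : i + 1 ≤ N' + 1 := by omega
    have hiN2 : i + 1 + 1 ≤ N' + 1 := by omega
    have h1 : τ (i+1) ≠ S :=
      ne_of_gt (lt_of_lt_of_le hτ1S (part_mono hp (by omega) hiN))
    have h2 : τ (i+1+1) ≠ S :=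
      ne_of_gt (lt_of_lt_of_le hτ1S (part_mono hp (by omega) hiN2))
    simp only [hGne _ h1, hGne _ h2]
  calc variSum F xbar A δ' (N'+1) τ
      = (∑ i ∈ Finset.range N', ⨆ x ∈ tube xbar (τ (i+1)) (τ (i+1+1)) δ', ⨆ a ∈ A,
          hausdorffEdist (F (τ (i+1+1)) x a) (F (τ (i+1)) x a)) +
        (⨆ x ∈ tube xbar (τ 0) (τ 1) δ', ⨆ a ∈ A,
          hausdorffEdist (F (τ 1) x a) (F (τ 0) x a)) := by
        rw [variSum, Finset.sum_range_succ']
    _ ≤ (∑ i ∈ Finset.range N', ⨆ x ∈ tube xbar (τ (i+1)) (τ (i+1+1)) δ', ⨆ a ∈ A,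
          hausdorffEdist (F (τ (i+1+1)) x a) (F (τ (i+1)) x a)) + (term0G + D) :=
        add_le_add_right hterm0 _
    _ = variSum G xbar A δ' (N'+1) τ + D := by
        rw [variSum, Finset.sum_range_succ', Finset.sum_congr rfl hrest]
        ring
    _ ≤ etaE G xbar A S δ' ε t + D :=
        add_le_add_left (variSum_le_etaE hp hm) _

lemma main_lb {F : ℝ → Eucl n → Eucl k → Set (Eucl n)} {xbar : ℝ → Eucl n}
    {A : Set (Eucl k)} {S T δbar δ : ℝ} {γ : ℝ → ℝ}
    (hST : S < T) (hx : ContinuousOn xbar (Icc S T)) (hA : IsCompact A)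
    (hC2 : HypC2 F xbar A S T δbar γ) (hδ : 0 < δ) (hδδ : δ < δbar)
    {Fp : Eucl n → Eucl k → Set (Eucl n)}
    (hFp : ∀ x ∈ closedBall (xbar S) δ, ∀ a ∈ A,
      Filter.Tendsto (fun s => hausdorffEdist (F s x a) (Fp x a))
        (𝓝[Ioc S T] S) (𝓝 0))
    {t : ℝ} (htS : S < t) (htT : t ≤ T)
    {δ' ρ : ℝ} (hδ'0 : 0 < δ') (hδ'le : δ' ≤ δ/2) (hρ0 : 0 < ρ) (hρle : ρ ≤ δ/2)
    (hρle2 : ρ ≤ (δbar - δ)/2) :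
    ∃ ε₀ > 0, ∀ ε, 0 < ε → ε ≤ ε₀ →
      etaE (leftMod S δ xbar F Fp) xbar A S δ' ε t +
        (⨆ a ∈ A, hausdorffEdist (Fp (xbar S) a) (F S (xbar S) a)) ≤
      etaE F xbar A S δ' ε t + ENNReal.ofReal (2 * (2 * γ (δ' + ρ) + ρ)) := by
  obtain ⟨ε₁, hε₁, hxb⟩ := xbar_small hST.le hx hρ0
  have hK3 := K3_uniform hST hx hA hC2 hδ hδδ hFp hρ0
  rw [Filter.Eventually, Metric.mem_nhdsWithin_iff] at hK3
  obtain ⟨ε₂, hε₂, hsub⟩ := hK3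
  refine ⟨min ε₁ (ε₂/2), lt_min hε₁ (by positivity), fun ε hε hεle => ?_⟩
  set G := leftMod S δ xbar F Fp with hG
  set dsup := ⨆ a ∈ A, hausdorffEdist (Fp (xbar S) a) (F S (xbar S) a) with hdsup
  set E := ENNReal.ofReal (2 * γ (δ' + ρ) + ρ) with hE
  have hγnn : 0 ≤ γ (δ' + ρ) := hC2.2.2.2.1 _ (by positivity)
  have key : ∀ N τ, IsPartition S t N τ → MeshLE N τ ε →
      variSum G xbar A δ' N τ + dsup ≤
        etaE F xbar A S δ' ε t + ENNReal.ofReal (2 * (2 * γ (δ' + ρ) + ρ)) := by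
    intro N τ hp hm
    obtain ⟨N', rfl⟩ : ∃ N', N = N' + 1 := ⟨N - 1, (Nat.succ_pred_eq_of_pos hp.1).symm⟩
    have hτ0 : τ 0 = S := hp.2.1
    have hτ1S : S < τ 1 := by
      have := hp.2.2.2 0 (Nat.succ_pos N'); rwa [hτ0] at this
    have hτ1t : τ 1 ≤ t := (part_mem hp (Nat.one_le_iff_ne_zero.mpr (Nat.succ_ne_zero N'))).2
    have hmesh1 : τ 1 - S ≤ ε := by
      have := hm 0 (Nat.succ_pos N'); rwa [hτ0] at this
    have hτ1ε : τ 1 ≤ S + ε₁ := by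
      have := le_trans hεle (min_le_left _ _); linarith
    have hτ1T : τ 1 ≤ T := hτ1t.trans htT
    have hτ1Icc : τ 1 ∈ Icc S T := ⟨hτ1S.le, hτ1T⟩
    have hxbτ1 : dist (xbar (τ 1)) (xbar S) ≤ ρ := hxb (τ 1) hτ1S.le hτ1T (by linarith)
    have hK3τ : ∀ a ∈ A, hausdorffEdist (F (τ 1) (xbar S) a) (Fp (xbar S) a) ≤
        ENNReal.ofReal ρ := by
      apply hsub
      constructor
      · rw [Metric.mem_ball, Real.dist_eq, abs_of_nonneg (by linarith)]
        have := le_trans hεle (min_le_right _ _)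
        linarith
      · exact ⟨hτ1S, hτ1T⟩
    have hGne : ∀ s, s ≠ S → ∀ x a, G s x a = F s x a := by
      intro s hs x a
      simp only [hG, leftMod]
      rw [if_neg]; rintro ⟨h1, -⟩; exact hs h1
    have htube : ∀ x ∈ tube xbar (τ 0) (τ 1) δ', dist x (xbar S) ≤ δ' + ρ := by
      rintro x ⟨r, hr, hd⟩
      rw [hτ0] at hr
      have h1 : dist (xbar r) (xbar S) ≤ ρ :=
        hxb r hr.1 (hr.2.trans hτ1T) (by linarith [hr.2])
      calc dist x (xbar S) ≤ dist x (xbar r) + dist (xbar r) (xbar S) := dist_triangle _ _ _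
        _ ≤ δ' + ρ := add_le_add hd h1
    have hΦ : ∀ x ∈ tube xbar (τ 0) (τ 1) δ', ∀ a ∈ A,
        hausdorffEdist (F (τ 1) x a) (Fp x a) ≤ E := by
      intro x hx' a ha
      have hxδρ := htube x hx'
      have hxδ : dist x (xbar S) ≤ δ := by linarith
      have hbx : dist x (xbar (τ 1)) ≤ δbar := by
        calc dist x (xbar (τ 1)) ≤ dist x (xbar S) + dist (xbar S) (xbar (τ 1)) :=
            dist_triangle _ _ _
          _ ≤ (δ' + ρ) + ρ := add_le_add hxδρ (by rwa [dist_comm])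
          _ ≤ δbar := by linarith
      have hbS : dist (xbar S) (xbar (τ 1)) ≤ δbar := by
        rw [dist_comm]; linarith [hxbτ1]
      have e1 : hausdorffEdist (F (τ 1) x a) (F (τ 1) (xbar S) a) ≤
          ENNReal.ofReal (γ (δ' + ρ)) := by
        refine (hausC2 hC2 hτ1Icc ha ha hbx hbS).trans (ENNReal.ofReal_le_ofReal ?_)
        rw [dist_self, add_zero]
        exact hC2.2.1 (mem_Ici.mpr dist_nonneg) (mem_Ici.mpr (by positivity)) hxδρ
      have e2 : hausdorffEdist (F (τ 1) (xbar S) a) (Fp (xbar S) a) ≤ ENNReal.ofReal ρ :=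
        hK3τ a ha
      have e3 : hausdorffEdist (Fp (xbar S) a) (Fp x a) ≤ ENNReal.ofReal (γ (δ' + ρ)) := by
        refine (hausC2_Fp hST hx hC2 hδ hδδ hFp (mem_closedBall_self hδ.le)
          (mem_closedBall.mpr hxδ) ha ha).trans (ENNReal.ofReal_le_ofReal ?_)
        rw [dist_self, add_zero, dist_comm]
        exact hC2.2.1 (mem_Ici.mpr dist_nonneg) (mem_Ici.mpr (by positivity)) hxδρ
      calc hausdorffEdist (F (τ 1) x a) (Fp x a)
          ≤ hausdorffEdist (F (τ 1) x a) (F (τ 1) (xbar S) a) +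
            hausdorffEdist (F (τ 1) (xbar S) a) (Fp x a) := hausdorffEdist_triangle
        _ ≤ hausdorffEdist (F (τ 1) x a) (F (τ 1) (xbar S) a) +
            (hausdorffEdist (F (τ 1) (xbar S) a) (Fp (xbar S) a) +
             hausdorffEdist (Fp (xbar S) a) (Fp x a)) :=
            add_le_add_right hausdorffEdist_triangle _
        _ ≤ ENNReal.ofReal (γ (δ' + ρ)) + (ENNReal.ofReal ρ + ENNReal.ofReal (γ (δ' + ρ))) :=
            add_le_add e1 (add_le_add e2 e3)
        _ = E := by
            rw [hE, ← ENNReal.ofReal_add hρ0.le hγnn,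
              ← ENNReal.ofReal_add hγnn (by positivity)]
            congr 1
            ring
    have hxSmem : xbar S ∈ tube xbar (τ 0) (τ 1) δ' := by
      refine ⟨S, ?_, by rw [dist_self]; exact hδ'0.le⟩
      rw [hτ0]
      exact ⟨le_rfl, hτ1S.le⟩
    set term0F := ⨆ x ∈ tube xbar (τ 0) (τ 1) δ', ⨆ a ∈ A,
        hausdorffEdist (F (τ 1) x a) (F (τ 0) x a) with hterm0F
    have hterm0G : (⨆ x ∈ tube xbar (τ 0) (τ 1) δ', ⨆ a ∈ A,
        hausdorffEdist (G (τ 1) x a) (G (τ 0) x a)) ≤ E := by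
      refine iSup₂_le fun x hx' => iSup₂_le fun a ha => ?_
      have hxδ : dist x (xbar S) ≤ δ := by linarith [htube x hx']
      have hG1 : G (τ 1) x a = F (τ 1) x a := hGne _ (ne_of_gt hτ1S) x a
      have hG0 : G (τ 0) x a = Fp x a := by
        simp only [hG, leftMod]
        rw [if_pos ⟨hτ0, hxδ⟩]
      rw [hG1, hG0]
      exact hΦ x hx' a ha
    have hdsup : dsup ≤ term0F + E := by
      refine iSup₂_le fun a ha => ?_
      have e1 : hausdorffEdist (Fp (xbar S) a) (F (τ 1) (xbar S) a) ≤ E := by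
        rw [show hausdorffEdist (Fp (xbar S) a) (F (τ 1) (xbar S) a) = hausdorffEdist (F (τ 1) (xbar S) a) (Fp (xbar S) a) from hausdorffEdist_comm]
        exact hΦ (xbar S) hxSmem a ha
      have e2 : hausdorffEdist (F (τ 1) (xbar S) a) (F (τ 0) (xbar S) a) ≤ term0F :=
        le_iSup₂_of_le (xbar S) hxSmem (le_iSup₂_of_le a ha le_rfl)
      calc hausdorffEdist (Fp (xbar S) a) (F S (xbar S) a)
          = hausdorffEdist (Fp (xbar S) a) (F (τ 0) (xbar S) a) := by rw [hτ0]
        _ ≤ hausdorffEdist (Fp (xbar S) a) (F (τ 1) (xbar S) a) +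
            hausdorffEdist (F (τ 1) (xbar S) a) (F (τ 0) (xbar S) a) :=
            hausdorffEdist_triangle
        _ ≤ E + term0F := add_le_add e1 e2
        _ = term0F + E := add_comm _ _
    have hrest : ∀ i ∈ Finset.range N',
        (⨆ x ∈ tube xbar (τ (i+1)) (τ (i+1+1)) δ', ⨆ a ∈ A,
          hausdorffEdist (G (τ (i+1+1)) x a) (G (τ (i+1)) x a)) =
        (⨆ x ∈ tube xbar (τ (i+1)) (τ (i+1+1)) δ', ⨆ a ∈ A,
          hausdorffEdist (F (τ (i+1+1)) x a) (F (τ (i+1)) x a)) := by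
      intro i hi
      simp only [Finset.mem_range] at hi
      have hiN : i + 1 ≤ N' + 1 := by omega
      have hiN2 : i + 1 + 1 ≤ N' + 1 := by omega
      have h1 : τ (i+1) ≠ S :=
        ne_of_gt (lt_of_lt_of_le hτ1S (part_mono hp (by omega) hiN))
      have h2 : τ (i+1+1) ≠ S :=
        ne_of_gt (lt_of_lt_of_le hτ1S (part_mono hp (by omega) hiN2))
      simp only [hGne _ h1, hGne _ h2]
    have hEE : E + E = ENNReal.ofReal (2 * (2 * γ (δ' + ρ) + ρ)) := by
      rw [hE, ← ENNReal.ofReal_add (by positivity) (by positivity)]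
      congr 1
      ring
    calc variSum G xbar A δ' (N'+1) τ + dsup
        = ((∑ i ∈ Finset.range N', ⨆ x ∈ tube xbar (τ (i+1)) (τ (i+1+1)) δ', ⨆ a ∈ A,
            hausdorffEdist (F (τ (i+1+1)) x a) (F (τ (i+1)) x a)) +
          (⨆ x ∈ tube xbar (τ 0) (τ 1) δ', ⨆ a ∈ A,
            hausdorffEdist (G (τ 1) x a) (G (τ 0) x a))) + dsup := by
          rw [variSum, Finset.sum_range_succ', Finset.sum_congr rfl hrest]
      _ ≤ ((∑ i ∈ Finset.range N', ⨆ x ∈ tube xbar (τ (i+1)) (τ (i+1+1)) δ', ⨆ a ∈ A,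
            hausdorffEdist (F (τ (i+1+1)) x a) (F (τ (i+1)) x a)) + E) + (term0F + E) :=
          add_le_add (add_le_add_right hterm0G _) hdsup
      _ = variSum F xbar A δ' (N'+1) τ + (E + E) := by
          rw [variSum, Finset.sum_range_succ']
          ring
      _ ≤ etaE F xbar A S δ' ε t + ENNReal.ofReal (2 * (2 * γ (δ' + ρ) + ρ)) := by
          rw [hEE]
          exact add_le_add_left (variSum_le_etaE hp hm) _
  obtain ⟨N₀, τ₀, hp₀, hm₀⟩ := exists_partition htS hε
  haveI hQ : Nonempty {q : ℕ × (ℕ → ℝ) // IsPartition S t q.1 q.2 ∧ MeshLE q.1 q.2 ε} :=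
    ⟨⟨(N₀, τ₀), hp₀, hm₀⟩⟩
  have hEq : etaE G xbar A S δ' ε t =
      ⨆ q : {q : ℕ × (ℕ → ℝ) // IsPartition S t q.1 q.2 ∧ MeshLE q.1 q.2 ε},
        variSum G xbar A δ' q.1.1 q.1.2 := by
    apply le_antisymm
    · refine iSup_le fun N => iSup_le fun τ => iSup_le fun hp => iSup_le fun hm => ?_
      exact le_iSup_of_le ⟨(N, τ), hp, hm⟩ le_rfl
    · exact iSup_le fun q => variSum_le_etaE q.2.1 q.2.2
  rw [hEq, ENNReal.iSup_add]
  exact iSup_le fun q => key q.1.1 q.1.2 q.2.1 q.2.2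

lemma stepC {F : ℝ → Eucl n → Eucl k → Set (Eucl n)} {xbar : ℝ → Eucl n}
    {A : Set (Eucl k)} {S T δbar δ : ℝ} {γ : ℝ → ℝ}
    (hST : S < T) (hx : ContinuousOn xbar (Icc S T))
    (hC2 : HypC2 F xbar A S T δbar γ) (hδ : 0 < δ) (hδδ : δ < δbar)
    {Fp : Eucl n → Eucl k → Set (Eucl n)}
    (hFp : ∀ x ∈ closedBall (xbar S) δ, ∀ a ∈ A,
      Filter.Tendsto (fun s => hausdorffEdist (F s x a) (Fp x a))
        (𝓝[Ioc S T] S) (𝓝 0))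
    {t : ℝ} (htS : S < t) (htT : t ≤ T)
    {δ' ρ : ℝ} (hδ'0 : 0 < δ') (hδ'le : δ' ≤ δ/2) (hρ0 : 0 < ρ) (hρle : ρ ≤ δ/2) :
    etaD F xbar A S δ' t ≤ etaD (leftMod S δ xbar F Fp) xbar A S δ' t +
      ((⨆ a ∈ A, hausdorffEdist (Fp (xbar S) a) (F S (xbar S) a)) +
        ENNReal.ofReal (2 * γ (δ' + ρ))) := by
  obtain ⟨ε₀, hε₀, hub⟩ := main_ub hST hx hC2 hδ hδδ hFp htS htT hδ'0 hδ'le hρ0 hρle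
  set G := leftMod S δ xbar F Fp
  set c := (⨆ a ∈ A, hausdorffEdist (Fp (xbar S) a) (F S (xbar S) a)) +
      ENNReal.ofReal (2 * γ (δ' + ρ)) with hc
  have hall : ∀ ε' > (0:ℝ), etaD F xbar A S δ' t ≤ etaE G xbar A S δ' ε' t + c := by
    intro ε' hε'
    have hεpos : 0 < min ε' ε₀ := lt_min hε' hε₀
    calc etaD F xbar A S δ' t ≤ etaE F xbar A S δ' (min ε' ε₀) t := etaD_le_etaE hεpos
      _ ≤ etaE G xbar A S δ' (min ε' ε₀) t + c := hub _ hεpos (min_le_right _ _)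
      _ ≤ etaE G xbar A S δ' ε' t + c :=
          add_le_add_left (etaE_mono_eps (min_le_left _ _)) _
  have : etaD G xbar A S δ' t + c = ⨅ ε' > (0:ℝ), (etaE G xbar A S δ' ε' t + c) :=
    binf_add _ _
  rw [this]
  exact le_iInf fun ε' => le_iInf fun hε' => hall ε' hε'

lemma stepD {F : ℝ → Eucl n → Eucl k → Set (Eucl n)} {xbar : ℝ → Eucl n}
    {A : Set (Eucl k)} {S T δbar δ : ℝ} {γ : ℝ → ℝ}
    (hST : S < T) (hx : ContinuousOn xbar (Icc S T)) (hA : IsCompact A)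
    (hC2 : HypC2 F xbar A S T δbar γ) (hδ : 0 < δ) (hδδ : δ < δbar)
    {Fp : Eucl n → Eucl k → Set (Eucl n)}
    (hFp : ∀ x ∈ closedBall (xbar S) δ, ∀ a ∈ A,
      Filter.Tendsto (fun s => hausdorffEdist (F s x a) (Fp x a))
        (𝓝[Ioc S T] S) (𝓝 0))
    {t : ℝ} (htS : S < t) (htT : t ≤ T)
    {δ' ρ : ℝ} (hδ'0 : 0 < δ') (hδ'le : δ' ≤ δ/2) (hρ0 : 0 < ρ) (hρle : ρ ≤ δ/2)
    (hρle2 : ρ ≤ (δbar - δ)/2) :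
    etaD (leftMod S δ xbar F Fp) xbar A S δ' t +
      (⨆ a ∈ A, hausdorffEdist (Fp (xbar S) a) (F S (xbar S) a)) ≤
    etaD F xbar A S δ' t + ENNReal.ofReal (2 * (2 * γ (δ' + ρ) + ρ)) := by
  obtain ⟨ε₀, hε₀, hlb⟩ :=
    main_lb hST hx hA hC2 hδ hδδ hFp htS htT hδ'0 hδ'le hρ0 hρle hρle2
  set G := leftMod S δ xbar F Fp
  set dsup := ⨆ a ∈ A, hausdorffEdist (Fp (xbar S) a) (F S (xbar S) a) with hdsup
  set c := ENNReal.ofReal (2 * (2 * γ (δ' + ρ) + ρ)) with hc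
  have hall : ∀ ε' > (0:ℝ), etaD G xbar A S δ' t + dsup ≤ etaE F xbar A S δ' ε' t + c := by
    intro ε' hε'
    have hεpos : 0 < min ε' ε₀ := lt_min hε' hε₀
    calc etaD G xbar A S δ' t + dsup ≤ etaE G xbar A S δ' (min ε' ε₀) t + dsup :=
          add_le_add_left (etaD_le_etaE hεpos) _
      _ ≤ etaE F xbar A S δ' (min ε' ε₀) t + c := hlb _ hεpos (min_le_right _ _)
      _ ≤ etaE F xbar A S δ' ε' t + c :=
          add_le_add_left (etaE_mono_eps (min_le_left _ _)) _
  have : etaD F xbar A S δ' t + c = ⨅ ε' > (0:ℝ), (etaE F xbar A S δ' ε' t + c) :=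
    binf_add _ _
  rw [this]
  exact le_iInf fun ε' => le_iInf fun hε' => hall ε' hε'

end AuxStmt19

/-- Modifying `F` only at the left endpoint (by the right limit
`F(S⁺,·,·)`) reduces the cumulative variation exactly by
`sup_{a ∈ A} d_H(F(S⁺,x̄(S),a), F(S,x̄(S),a))`:  for every `t ∈ (S,T]`,
`η(t) = η̂(t) + sup_{a∈A} d_H(F(S⁺,x̄(S),a), F(S,x̄(S),a))`. -/
theorem stmt19 {n k : ℕ} (S T : ℝ) (hST : S < T)
    (A : Set (Eucl k)) (hA : IsCompact A)
    (F : ℝ → Eucl n → Eucl k → Set (Eucl n))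
    (xbar : ℝ → Eucl n) (hx : ContinuousOn xbar (Icc S T))
    (hBV : eta F xbar A S T < ⊤)
    (δbar : ℝ) (hδbar : 0 < δbar) (hfin : etaD F xbar A S δbar T < ⊤)
    (hC1 : HypC1 F xbar A S T δbar)
    (γ : ℝ → ℝ) (hC2 : HypC2 F xbar A S T δbar γ)
    (δ : ℝ) (hδ : 0 < δ) (hδδ : δ < δbar)
    (Fp : Eucl n → Eucl k → Set (Eucl n))
    (hFp : ∀ x ∈ closedBall (xbar S) δ, ∀ a ∈ A,
      Tendsto (fun s => EMetric.hausdorffEdist (F s x a) (Fp x a))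
        (𝓝[Ioc S T] S) (𝓝 0)) :
    ∀ t : ℝ, S < t → t ≤ T →
      eta F xbar A S t =
        eta (leftMod S δ xbar F Fp) xbar A S t +
          ⨆ a ∈ A, EMetric.hausdorffEdist (Fp (xbar S) a) (F S (xbar S) a) := by
  intro t htS htT
  set G := leftMod S δ xbar F Fp with hGdef
  set dsup := ⨆ a ∈ A, EMetric.hausdorffEdist (Fp (xbar S) a) (F S (xbar S) a) with hdsup
  apply le_antisymm
  · -- eta F ≤ eta G + dsup
    have heq : eta G xbar A S t + dsup =
        ⨅ δ'₁ > (0:ℝ), (etaD G xbar A S δ'₁ t + dsup) := binf_add _ _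
    rw [heq]
    refine le_iInf fun δ'₁ => le_iInf fun hδ'₁ => ?_
    refine ENNReal.le_of_forall_pos_le_add fun ϑ hϑ _ => ?_
    have hϑR : (0:ℝ) < (ϑ:ℝ) := hϑ
    obtain ⟨r₁, hr₁, hγs⟩ := gamma_small hC2 (show (0:ℝ) < (ϑ:ℝ)/2 by positivity)
    set δ'' := min δ'₁ (min (δ/2) (r₁/2)) with hδ''
    set ρ := min (δ/2) (r₁/2) with hρdef
    have hδ''0 : 0 < δ'' := lt_min hδ'₁ (lt_min (by positivity) (by positivity))
    have hρ0 : 0 < ρ := lt_min (by positivity) (by positivity)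
    have h1 := stepC hST hx hC2 hδ hδδ hFp htS htT hδ''0
      (le_trans (min_le_right _ _) (min_le_left _ _)) hρ0 (min_le_left _ _)
    have hbound : ENNReal.ofReal (2 * γ (δ'' + ρ)) ≤ (ϑ : ℝ≥0∞) := by
      have i1 : δ'' ≤ r₁/2 := le_trans (min_le_right _ _) (min_le_right _ _)
      have i2 : ρ ≤ r₁/2 := min_le_right _ _
      have := hγs (δ'' + ρ) (by positivity) (by linarith)
      rw [← ENNReal.ofReal_coe_nnreal]
      exact ENNReal.ofReal_le_ofReal (by linarith)
    calc eta F xbar A S t ≤ etaD F xbar A S δ'' t := iInf₂_le δ'' hδ''0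
      _ ≤ etaD G xbar A S δ'' t +
          (dsup + ENNReal.ofReal (2 * γ (δ'' + ρ))) := h1
      _ ≤ etaD G xbar A S δ'₁ t + (dsup + (ϑ : ℝ≥0∞)) :=
          add_le_add (etaD_mono_delta (min_le_left _ _)) (add_le_add_right hbound _)
      _ = etaD G xbar A S δ'₁ t + dsup + (ϑ : ℝ≥0∞) := (add_assoc _ _ _).symm
  · -- eta G + dsup ≤ eta F
    refine le_iInf fun δ'₁ => le_iInf fun hδ'₁ => ?_
    refine ENNReal.le_of_forall_pos_le_add fun ϑ hϑ _ => ?_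
    have hϑR : (0:ℝ) < (ϑ:ℝ) := hϑ
    obtain ⟨r₁, hr₁, hγs⟩ := gamma_small hC2 (show (0:ℝ) < (ϑ:ℝ)/8 by positivity)
    set δ'' := min δ'₁ (min (δ/2) (r₁/2)) with hδ''
    set ρ := min (δ/2) (min ((δbar - δ)/2) (min (r₁/2) ((ϑ:ℝ)/8))) with hρdef
    have hδ''0 : 0 < δ'' := lt_min hδ'₁ (lt_min (by positivity) (by positivity))
    have hsb : 0 < (δbar - δ)/2 := by linarith
    have hρ0 : 0 < ρ := lt_min (by positivity) (lt_min hsb (lt_min (by positivity)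
      (by positivity)))
    have h1 := stepD hST hx hA hC2 hδ hδδ hFp htS htT hδ''0
      (le_trans (min_le_right _ _) (min_le_left _ _)) hρ0 (min_le_left _ _)
      (le_trans (min_le_right _ _) (min_le_left _ _))
    have hbound : ENNReal.ofReal (2 * (2 * γ (δ'' + ρ) + ρ)) ≤ (ϑ : ℝ≥0∞) := by
      have i1 : δ'' ≤ r₁/2 := le_trans (min_le_right _ _) (min_le_right _ _)
      have i2 : ρ ≤ r₁/2 :=
        le_trans (min_le_right _ _) (le_trans (min_le_right _ _) (min_le_left _ _))
      have i3 : ρ ≤ (ϑ:ℝ)/8 :=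
        le_trans (min_le_right _ _) (le_trans (min_le_right _ _) (min_le_right _ _))
      have := hγs (δ'' + ρ) (by positivity) (by linarith)
      rw [← ENNReal.ofReal_coe_nnreal]
      exact ENNReal.ofReal_le_ofReal (by linarith)
    calc eta G xbar A S t + dsup ≤ etaD G xbar A S δ'' t + dsup :=
          add_le_add_left (iInf₂_le δ'' hδ''0) dsup
      _ ≤ etaD F xbar A S δ'' t + ENNReal.ofReal (2 * (2 * γ (δ'' + ρ) + ρ)) := h1
      _ ≤ etaD F xbar A S δ'₁ t + (ϑ : ℝ≥0∞) :=
          add_le_add (etaD_mono_delta (min_le_left _ _)) hbound
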